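/- Let F_n(x) be the Fibonacci polynomials defined by F_0(x)=0, F_1(x)=1, and F_{n+1}(x)=x F_n(x)+F_{n-1}(x) for n≥1. Then for every n≥1 and every nonzero x in a field, F_n(x - 1/x) = x^{n-1} * (1 + (-x^{-2}) + (-x^{-2})^2 + ... + (-x^{-2})^{n-1}). -/

import Mathlib

/-- Fibonacci polynomials evaluated at `x`: `F 0 = 0`, `F 1 = 1`,
`F (n+2) = x * F (n+1) + F n`. -/
def fibPoly {K : Type*} [Field K] (x : K) : ℕ → K
  | 0 => 0
  | 1 => 1
  | n + 2 => x * fibPoly x (n + 1) + fibPoly x n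

lemma fibPoly_aux {K : Type*} [Field K] (x : K) (hx : x ≠ 0) (n : ℕ) :
    fibPoly (x - 1 / x) (n + 1) =
      x ^ n * ∑ k ∈ Finset.range (n + 1), (-(x⁻¹ ^ 2)) ^ k := by
  induction n using Nat.twoStepInduction with
  | zero => simp [fibPoly]
  | one =>
    show fibPoly (x - 1 / x) 2 = _
    rw [show (fibPoly (x - 1 / x) 2) = (x - 1/x) * fibPoly (x - 1/x) 1 + fibPoly (x - 1/x) 0
      from rfl]
    simp [fibPoly, Finset.sum_range_succ]
    field_simp
    ring
  | more n ih1 ih2 =>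
    rw [show n + 2 + 1 = (n + 1) + 2 from rfl,
      show fibPoly (x - 1/x) ((n+1)+2) =
        (x - 1/x) * fibPoly (x - 1/x) (n + 2) + fibPoly (x - 1/x) (n + 1) from rfl,
      ih1, ih2, Finset.sum_range_succ (n := n + 2), Finset.sum_range_succ (n := n + 1)]
    field_simp
    have key : x * x⁻¹ = 1 := mul_inv_cancel₀ hx
    linear_combination (x ^ n * x⁻¹ ^ (n * 2) * (-1) ^ n * (x * x⁻¹ + 1) * (-(x⁻¹ * (x * x⁻¹)))) * key

theorem fibPoly_q_analogue {K : Type*} [Field K] (x : K) (hx : x ≠ 0)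
    (n : ℕ) (hn : 1 ≤ n) :
    fibPoly (x - 1 / x) n = x ^ (n - 1) * ∑ k ∈ Finset.range n, (-(x⁻¹ ^ 2)) ^ k := by
  obtain ⟨m, rfl⟩ := Nat.exists_eq_add_of_le hn
  rw [Nat.add_comm 1 m]
  exact fibPoly_aux x hx m
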